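/- arXiv:2006.05761 — 3 statements merged into one kernel-verified Lean document; each statement's English description precedes it below -/
import Mathlib

section
/- For a spherical pseudo-differential operator D with trivial nullspace and spectral growth order p > (d-1)/2, every square-integrable function f ∈ L²(S^{d-1}) satisfies D^{-1}f ∈ C(S^{d-1}); i.e. the series Σ_n (1/D̂_n) Σ_m f̂_n^m Y_n^m converges uniformly on S^{d-1} to a continuous function. -/
open Filter

/-- Compatibility of square-integrable functions: if `D` has trivial nullspace and
spectral growth order `p > (d-1)/2`, then for every `f ∈ L²(S^{d-1})` (given through
its spherical Fourier coefficients `f̂_n^m`, square-summable), the series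
`Σ_n (1/D̂_n) Σ_m f̂_n^m Y_n^m` converges uniformly on the sphere to a continuous
function, i.e. `D⁻¹ f ∈ C(S^{d-1})`. -/
theorem stmt11 (d : ℕ) (hd : 2 ≤ d) (p : ℝ) (hp : ((d : ℝ) - 1) / 2 < p)
    (Dhat : ℕ → ℝ) (hD0 : ∀ n, Dhat n ≠ 0)
    (hgrowth : ∃ C₁ C₂ : ℝ, 0 < C₁ ∧ 0 < C₂ ∧ ∃ n₀ : ℕ, ∀ n : ℕ, n₀ ≤ n →
      C₁ * (n : ℝ) ^ p ≤ |Dhat n| ∧ |Dhat n| ≤ C₂ * (n : ℝ) ^ p)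
    (Nd : ℕ → ℕ)
    (hNd : ∃ C : ℝ, 0 < C ∧ ∀ n : ℕ, 1 ≤ n → (Nd n : ℝ) ≤ C * (n : ℝ) ^ ((d : ℝ) - 2))
    (ad : ℝ) (had : 0 < ad)
    (Y : (n : ℕ) → Fin (Nd n) → (Metric.sphere (0 : EuclideanSpace ℝ (Fin d)) 1) → ℂ)
    (hYcont : ∀ n m, Continuous (Y n m))
    (haddition : ∀ (n : ℕ) (x : Metric.sphere (0 : EuclideanSpace ℝ (Fin d)) 1),
      ∑ m, ‖Y n m x‖ ^ 2 = (Nd n : ℝ) / ad)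
    (fhat : (n : ℕ) → Fin (Nd n) → ℂ)
    (hf : Summable (fun n : ℕ => ∑ m, ‖fhat n m‖ ^ 2)) :
    ∃ g : (Metric.sphere (0 : EuclideanSpace ℝ (Fin d)) 1) → ℂ,
      Continuous g ∧
      TendstoUniformly
        (fun (N : ℕ) (x : Metric.sphere (0 : EuclideanSpace ℝ (Fin d)) 1) =>
          ∑ n ∈ Finset.range N, ((Dhat n : ℂ))⁻¹ * ∑ m, fhat n m * Y n m x)
        g atTop := by
  classical
  obtain ⟨C₁, C₂, hC₁, hC₂, n₀, hgr⟩ := hgrowth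
  obtain ⟨C, hC, hNdC⟩ := hNd
  have hd2 : (2 : ℝ) ≤ (d : ℝ) := by exact_mod_cast hd
  have hppos : 0 < p := by linarith
  have hadne : ad ≠ 0 := ne_of_gt had
  have hC₁ne : C₁ ≠ 0 := ne_of_gt hC₁
  set A : ℕ → ℝ := fun n => ∑ m, ‖fhat n m‖ ^ 2 with hAdef
  have hA0 : ∀ n, 0 ≤ A n := fun n => Finset.sum_nonneg fun m _ => sq_nonneg _
  set u : ℕ → ℝ := fun n =>
    |Dhat n|⁻¹ * (Real.sqrt (A n) * Real.sqrt ((Nd n : ℝ) / ad)) with hudef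
  have hu0 : ∀ n, 0 ≤ u n := by
    intro n
    refine mul_nonneg (inv_nonneg.mpr (abs_nonneg _))
      (mul_nonneg (Real.sqrt_nonneg _) (Real.sqrt_nonneg _))
  -- pointwise bound
  have hbound : ∀ (n : ℕ) (x : Metric.sphere (0 : EuclideanSpace ℝ (Fin d)) 1),
      ‖((Dhat n : ℂ))⁻¹ * ∑ m, fhat n m * Y n m x‖ ≤ u n := by
    intro n x
    have h1 : ‖∑ m, fhat n m * Y n m x‖ ≤ ∑ m, ‖fhat n m‖ * ‖Y n m x‖ := by
      refine (norm_sum_le _ _).trans ?_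
      refine le_of_eq (Finset.sum_congr rfl fun m _ => ?_)
      exact norm_mul _ _
    have h2 : ∑ m, ‖fhat n m‖ * ‖Y n m x‖ ≤
        Real.sqrt (A n) * Real.sqrt ((Nd n : ℝ) / ad) := by
      have key := Real.sum_mul_le_sqrt_mul_sqrt Finset.univ
        (fun m => ‖fhat n m‖) (fun m => ‖Y n m x‖)
      rw [haddition n x] at key
      exact key
    have hnorm : ‖((Dhat n : ℂ))⁻¹‖ = |Dhat n|⁻¹ := by
      rw [norm_inv, Complex.norm_real, Real.norm_eq_abs]
    rw [norm_mul, hnorm]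
    exact mul_le_mul_of_nonneg_left (h1.trans h2) (inv_nonneg.mpr (abs_nonneg _))
  -- summability of u
  have hsumu : Summable u := by
    set k := max n₀ 1 with hk
    set b : ℕ → ℝ := fun n =>
      Real.sqrt (C * (n : ℝ) ^ ((d : ℝ) - 2) / ad) / (C₁ * (n : ℝ) ^ p) with hbdef
    have hw : Summable (fun n : ℕ => (A n + (b n) ^ 2) / 2) := by
      have hb2 : Summable (fun n : ℕ => (b n) ^ 2) := by
        have hexp : (d : ℝ) - 2 - 2 * p < -1 := by linarith
        have hs' : Summable (fun n : ℕ =>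
            C / (ad * C₁ ^ 2) * (n : ℝ) ^ ((d : ℝ) - 2 - 2 * p)) :=
          (Real.summable_nat_rpow.mpr hexp).mul_left _
        refine hs'.of_nonneg_of_le (fun n => sq_nonneg _) ?_
        intro n
        rcases Nat.eq_zero_or_pos n with h0 | h0
        · subst h0
          have hb0 : b 0 = 0 := by
            simp [hbdef, Real.zero_rpow (ne_of_gt hppos)]
          rw [hb0]
          simp only [pow_two, mul_zero]
          exact mul_nonneg (by positivity) (Real.rpow_nonneg (by norm_num) _)
        · have hn1 : (1 : ℝ) ≤ (n : ℝ) := by exact_mod_cast h0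
          have hnpos : (0 : ℝ) < (n : ℝ) := by linarith
          have hnpne : (n : ℝ) ^ p ≠ 0 := by positivity
          have hn2pne : (n : ℝ) ^ (2 * p) ≠ 0 := by positivity
          have e1 : ((n : ℝ) ^ p) ^ 2 = (n : ℝ) ^ (2 * p) := by
            rw [← Real.rpow_natCast ((n : ℝ) ^ p) 2, ← Real.rpow_mul hnpos.le]
            norm_num [mul_comm]
          have e2 : (n : ℝ) ^ ((d : ℝ) - 2 - 2 * p) =
              (n : ℝ) ^ ((d : ℝ) - 2) / (n : ℝ) ^ (2 * p) := by
            rw [← Real.rpow_sub hnpos]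
          have hsq : (b n) ^ 2 =
              C * (n : ℝ) ^ ((d : ℝ) - 2) / ad / (C₁ * (n : ℝ) ^ p) ^ 2 := by
            rw [hbdef, div_pow, Real.sq_sqrt (by positivity)]
          have key : (b n) ^ 2 = C / (ad * C₁ ^ 2) * (n : ℝ) ^ ((d : ℝ) - 2 - 2 * p) := by
            rw [hsq, mul_pow, e1, e2]
            field_simp
          rw [key]
      exact (hf.add hb2).div_const 2
    rw [← summable_nat_add_iff k]
    refine ((summable_nat_add_iff k).mpr hw).of_nonneg_of_le (fun n => hu0 _) ?_
    intro n
    have hkn : k ≤ n + k := Nat.le_add_left _ _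
    have hn0 : n₀ ≤ n + k := le_trans (le_max_left _ _) hkn
    have hn1 : 1 ≤ n + k := le_trans (le_max_right _ _) hkn
    set m := n + k with hm
    have hn1R : (1 : ℝ) ≤ (m : ℝ) := by exact_mod_cast hn1
    have hmpos : (0 : ℝ) < (m : ℝ) := by linarith
    have hDlow : C₁ * (m : ℝ) ^ p ≤ |Dhat m| := (hgr m hn0).1
    have hDpos : (0 : ℝ) < C₁ * (m : ℝ) ^ p := by positivity
    have hinv : |Dhat m|⁻¹ ≤ (C₁ * (m : ℝ) ^ p)⁻¹ := inv_anti₀ hDpos hDlow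
    have hNdle : Real.sqrt ((Nd m : ℝ) / ad) ≤
        Real.sqrt (C * (m : ℝ) ^ ((d : ℝ) - 2) / ad) :=
      Real.sqrt_le_sqrt (div_le_div_of_nonneg_right (hNdC m hn1) had.le)
    have step1 : u m ≤ Real.sqrt (A m) * b m := by
      have h1 : |Dhat m|⁻¹ * (Real.sqrt (A m) * Real.sqrt ((Nd m : ℝ) / ad)) ≤
          (C₁ * (m : ℝ) ^ p)⁻¹ *
            (Real.sqrt (A m) * Real.sqrt (C * (m : ℝ) ^ ((d : ℝ) - 2) / ad)) := by
        refine mul_le_mul hinv ?_ (mul_nonneg (Real.sqrt_nonneg _) (Real.sqrt_nonneg _))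
          (le_of_lt (inv_pos.mpr hDpos))
        exact mul_le_mul_of_nonneg_left hNdle (Real.sqrt_nonneg _)
      refine h1.trans (le_of_eq ?_)
      rw [hbdef]
      ring
    have step2 : Real.sqrt (A m) * b m ≤ (A m + (b m) ^ 2) / 2 := by
      nlinarith [sq_nonneg (Real.sqrt (A m) - b m), Real.sq_sqrt (hA0 m)]
    exact step1.trans step2
  -- conclude via the Weierstrass M-test
  have htu : TendstoUniformly
      (fun (N : ℕ) (x : Metric.sphere (0 : EuclideanSpace ℝ (Fin d)) 1) =>
        ∑ n ∈ Finset.range N, ((Dhat n : ℂ))⁻¹ * ∑ m, fhat n m * Y n m x)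
      (fun x => ∑' n, ((Dhat n : ℂ))⁻¹ * ∑ m, fhat n m * Y n m x) atTop :=
    tendstoUniformly_tsum_nat hsumu hbound
  refine ⟨_, ?_, htu⟩
  exact htu.continuous (Eventually.frequently (Eventually.of_forall fun N =>
    continuous_finset_sum _ fun n _ => continuous_const.mul
      (continuous_finset_sum _ fun m _ => continuous_const.mul (hYcont n m))))
end

section
/- Let D be a positive-definite spline-admissible pseudo-differential operator with spectral growth order p > (d+1)/2, whose zonal Green kernel ψ_D is the reproducing kernel of the Hilbert space H = H_{D^{1/2}}(S^{d-1}) with inner product ⟨h,g⟩_{D^{1/2}} = ⟨D^{1/2}h, D^{1/2}g⟩. If ψ_D satisfies the uniform Lipschitz bound |ψ_D(⟨r,ρ⟩) - ψ_D(⟨s,ρ⟩)| ≤ L_D² ‖r-s‖ for all r,s,ρ ∈ S^{d-1}, then for any knot set Ξ_N ⊂ S^{d-1} with nodal width Θ = max_r min_{s∈Ξ_N} ‖r-s‖, the orthogonal projection s_N of any h ∈ H onto span{ψ_D(⟨·, r_n⟩) : r_n ∈ Ξ_N} satisfies ‖h - s_N‖_∞ ≤ 2^{3/2} L_D √Θ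 ‖h‖_{D^{1/2}}. -/
/-- Approximation error of spline interpolation on the sphere.  `H` is the RKHS
`H_{D^{1/2}}(S^{d-1})` with reproducing kernel `K(r,s) = ψ_D(⟨r,s⟩)`, represented by
kernel sections `k : S^{d-1} → H` (so that `h(r) = ⟪k r, h⟫` and
`⟪k r, k s⟫ = ψ_D(⟨r,s⟩)`).  If `ψ_D` satisfies the uniform Lipschitz bound
`|ψ_D(⟨r,ρ⟩) - ψ_D(⟨s,ρ⟩)| ≤ L_D² ‖r - s‖`, and `Ξ_N = {r_1, …, r_N}` is a knot set
with nodal width at most `Θ` (every point of the sphere is within chordal distance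
`Θ` of a knot), then the orthogonal projection `s_N` of `h ∈ H` onto
`span{ψ_D(⟨·, r_n⟩)}` satisfies `‖h - s_N‖_∞ ≤ 2^{3/2} L_D √Θ ‖h‖_{D^{1/2}}`. -/
theorem stmt15 (d : ℕ) (H : Type*) [NormedAddCommGroup H] [InnerProductSpace ℂ H]
    (k : (Metric.sphere (0 : EuclideanSpace ℝ (Fin d)) 1) → H)
    (ψ : ℝ → ℝ) (L : ℝ) (hL : 0 ≤ L)
    (hker : ∀ r s : Metric.sphere (0 : EuclideanSpace ℝ (Fin d)) 1,
      (inner ℂ (k r) (k s) : ℂ)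
        = ((ψ (inner ℝ (r : EuclideanSpace ℝ (Fin d)) (s : EuclideanSpace ℝ (Fin d)) : ℝ) : ℝ) : ℂ))
    (hLip : ∀ r s ρ : Metric.sphere (0 : EuclideanSpace ℝ (Fin d)) 1,
      |ψ (inner ℝ (r : EuclideanSpace ℝ (Fin d)) (ρ : EuclideanSpace ℝ (Fin d)) : ℝ)
        - ψ (inner ℝ (s : EuclideanSpace ℝ (Fin d)) (ρ : EuclideanSpace ℝ (Fin d)) : ℝ)|
        ≤ L ^ 2 * ‖(r : EuclideanSpace ℝ (Fin d)) - (s : EuclideanSpace ℝ (Fin d))‖)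
    (N : ℕ) (rknots : Fin N → Metric.sphere (0 : EuclideanSpace ℝ (Fin d)) 1)
    (Θ : ℝ)
    (hΘ : ∀ x : Metric.sphere (0 : EuclideanSpace ℝ (Fin d)) 1, ∃ n : Fin N,
      ‖(x : EuclideanSpace ℝ (Fin d)) - (rknots n : EuclideanSpace ℝ (Fin d))‖ ≤ Θ)
    (h sN : H)
    (hsN : sN ∈ Submodule.span ℂ (Set.range (fun n => k (rknots n))))
    (horth : ∀ v ∈ Submodule.span ℂ (Set.range (fun n => k (rknots n))),
      (inner ℂ v (h - sN) : ℂ) = 0) :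
    ∀ x : Metric.sphere (0 : EuclideanSpace ℝ (Fin d)) 1,
      ‖(inner ℂ (k x) h : ℂ) - (inner ℂ (k x) sN : ℂ)‖
        ≤ 2 ^ ((3 : ℝ) / 2) * L * Real.sqrt Θ * ‖h‖ := by
  intro x
  obtain ⟨n, hn⟩ := hΘ x
  set r := rknots n with hr
  have hΘ0 : (0:ℝ) ≤ Θ := le_trans (norm_nonneg _) hn
  -- h - sN is orthogonal to k r
  have h0 : (inner ℂ (k r) (h - sN) : ℂ) = 0 :=
    horth _ (Submodule.subset_span ⟨n, rfl⟩)
  -- rewrite the difference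
  have key : (inner ℂ (k x) h : ℂ) - (inner ℂ (k x) sN : ℂ)
      = inner ℂ (k x - k r) (h - sN) := by
    rw [inner_sub_left, h0, sub_zero, inner_sub_right]
  -- ‖h - sN‖ ≤ ‖h‖
  have hproj : ‖h - sN‖ ≤ ‖h‖ := by
    have hsn0 : (inner ℂ sN (h - sN) : ℂ) = 0 := horth _ hsN
    have e : (‖h - sN‖:ℝ)^2 = RCLike.re (inner ℂ (h - sN) h : ℂ) := by
      have : (inner ℂ (h - sN) (h - sN) : ℂ) = inner ℂ (h - sN) h := by
        rw [inner_sub_right]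
        have : (inner ℂ (h - sN) sN : ℂ) = 0 := by
          rw [← inner_conj_symm, hsn0, map_zero]
        rw [this, sub_zero]
      rw [← inner_self_eq_norm_sq (𝕜 := ℂ), this]
    have hle : RCLike.re (inner ℂ (h - sN) h : ℂ) ≤ ‖h - sN‖ * ‖h‖ :=
      le_trans (RCLike.re_le_norm _) (norm_inner_le_norm _ _)
    nlinarith [norm_nonneg (h - sN), norm_nonneg h]
  -- bound on ‖k x - k r‖
  have hksq : ‖k x - k r‖^2 ≤ 2 * L^2 * Θ := by
    have e : (‖k x - k r‖:ℝ)^2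
        = (ψ (inner ℝ (x : EuclideanSpace ℝ (Fin d)) (x : EuclideanSpace ℝ (Fin d)) : ℝ)
            - ψ (inner ℝ (r : EuclideanSpace ℝ (Fin d)) (x : EuclideanSpace ℝ (Fin d)) : ℝ))
          + (ψ (inner ℝ (r : EuclideanSpace ℝ (Fin d)) (r : EuclideanSpace ℝ (Fin d)) : ℝ)
            - ψ (inner ℝ (x : EuclideanSpace ℝ (Fin d)) (r : EuclideanSpace ℝ (Fin d)) : ℝ)) := by
      have := inner_self_eq_norm_sq (𝕜 := ℂ) (k x - k r)
      rw [← this, inner_sub_sub_self, hker, hker, hker, hker]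
      have hsym : (inner ℝ (x : EuclideanSpace ℝ (Fin d)) (r : EuclideanSpace ℝ (Fin d)) : ℝ)
          = (inner ℝ (r : EuclideanSpace ℝ (Fin d)) (x : EuclideanSpace ℝ (Fin d)) : ℝ) :=
        real_inner_comm _ _
      rw [hsym]
      ring_nf
      simp [RCLike.ofReal_re]
    have b1 := hLip x r x
    have b2 := hLip r x r
    have c1 : ψ (inner ℝ (x : EuclideanSpace ℝ (Fin d)) (x : EuclideanSpace ℝ (Fin d)) : ℝ)
        - ψ (inner ℝ (r : EuclideanSpace ℝ (Fin d)) (x : EuclideanSpace ℝ (Fin d)) : ℝ)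
        ≤ L^2 * Θ := by
      have := abs_le.mp b1
      nlinarith [sq_nonneg L]
    have c2 : ψ (inner ℝ (r : EuclideanSpace ℝ (Fin d)) (r : EuclideanSpace ℝ (Fin d)) : ℝ)
        - ψ (inner ℝ (x : EuclideanSpace ℝ (Fin d)) (r : EuclideanSpace ℝ (Fin d)) : ℝ)
        ≤ L^2 * Θ := by
      have := abs_le.mp b2
      have hn' : ‖(r : EuclideanSpace ℝ (Fin d)) - (x : EuclideanSpace ℝ (Fin d))‖
          = ‖(x : EuclideanSpace ℝ (Fin d)) - (r : EuclideanSpace ℝ (Fin d))‖ := norm_sub_rev _ _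
      nlinarith [sq_nonneg L]
    linarith [e ▸ (add_le_add c1 c2)]
  have hk : ‖k x - k r‖ ≤ Real.sqrt 2 * L * Real.sqrt Θ := by
    have : ‖k x - k r‖ = Real.sqrt (‖k x - k r‖^2) := by
      rw [Real.sqrt_sq (norm_nonneg _)]
    rw [this]
    calc Real.sqrt (‖k x - k r‖^2) ≤ Real.sqrt (2 * L^2 * Θ) := Real.sqrt_le_sqrt hksq
      _ = Real.sqrt 2 * L * Real.sqrt Θ := by
          rw [Real.sqrt_mul (by positivity), Real.sqrt_mul (by norm_num), Real.sqrt_sq hL]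
  -- Cauchy-Schwarz
  have cs : ‖(inner ℂ (k x - k r) (h - sN) : ℂ)‖ ≤ ‖k x - k r‖ * ‖h - sN‖ :=
    norm_inner_le_norm _ _
  have hsqrt2 : Real.sqrt 2 ≤ 2 ^ ((3:ℝ)/2) := by
    rw [Real.sqrt_eq_rpow]
    exact Real.rpow_le_rpow_of_exponent_le (by norm_num) (by norm_num)
  calc ‖(inner ℂ (k x) h : ℂ) - (inner ℂ (k x) sN : ℂ)‖
      = ‖(inner ℂ (k x - k r) (h - sN) : ℂ)‖ := by rw [key]
    _ ≤ ‖k x - k r‖ * ‖h - sN‖ := cs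
    _ ≤ (Real.sqrt 2 * L * Real.sqrt Θ) * ‖h‖ := by
        apply mul_le_mul hk hproj (norm_nonneg _)
        positivity
    _ ≤ 2 ^ ((3:ℝ)/2) * L * Real.sqrt Θ * ‖h‖ := by
        have : (0:ℝ) ≤ L * Real.sqrt Θ * ‖h‖ := by positivity
        nlinarith [Real.sqrt_nonneg (2:ℝ), Real.sqrt_nonneg Θ, norm_nonneg h]
end

section
/- Let K be the reproducing kernel of an RKHS H of functions on a metric space X, and suppose K(r,r) + K(s,s) - 2Re K(r,s) ≤ 2L² d(r,s) for all r,s ∈ X. If s_N is the orthogonal projection of h ∈ H onto the span of {K(·, r_n) : r_n ∈ Ξ_N}, then for every r ∈ X and every knot r_n, |h(r) - s_N(r)| ≤ 2 L √(2 d(r, r_n)) ‖h‖_H. -/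
/-- Abstract RKHS projection error bound: let `H` be an RKHS of functions on a metric
space `X` with kernel `K(r,s) = ⟪k r, k s⟫` given by kernel sections `k : X → H`
(so `h(r) = ⟪k r, h⟫`).  Suppose `K(r,r) + K(s,s) - 2 Re K(r,s) ≤ 2 L² d(r,s)`.
If `s_N` is the orthogonal projection of `h ∈ H` onto `span{K(·, r_n)}` (membership
and orthogonality of the residual), then for every `r ∈ X` and every knot `r_n`,
`|h(r) - s_N(r)| ≤ 2 L √(2 d(r, r_n)) ‖h‖_H`. -/
theorem stmt16 (X : Type*) [MetricSpace X]
    (H : Type*) [NormedAddCommGroup H] [InnerProductSpace ℂ H]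
    (k : X → H) (L : ℝ) (hL : 0 ≤ L)
    (hLip : ∀ r s : X,
      (inner ℂ (k r) (k r) : ℂ).re + (inner ℂ (k s) (k s) : ℂ).re
        - 2 * (inner ℂ (k r) (k s) : ℂ).re ≤ 2 * L ^ 2 * dist r s)
    (N : ℕ) (rknots : Fin N → X) (h sN : H)
    (hsN : sN ∈ Submodule.span ℂ (Set.range (fun n => k (rknots n))))
    (horth : ∀ v ∈ Submodule.span ℂ (Set.range (fun n => k (rknots n))),
      (inner ℂ v (h - sN) : ℂ) = 0) :
    ∀ (r : X) (n : Fin N),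
      ‖(inner ℂ (k r) h : ℂ) - (inner ℂ (k r) sN : ℂ)‖
        ≤ 2 * L * Real.sqrt (2 * dist r (rknots n)) * ‖h‖ := by
  intro r n
  have hdist : (0:ℝ) ≤ dist r (rknots n) := dist_nonneg
  -- residual norm bound
  have hres : ‖h - sN‖ ≤ ‖h‖ := by
    have h0 : (inner ℂ sN (h - sN) : ℂ) = 0 := horth _ hsN
    have hsum : ‖sN + (h - sN)‖ ^ 2 = ‖sN‖ ^ 2 + 2 * (inner ℂ sN (h - sN) : ℂ).re + ‖h - sN‖ ^ 2 :=
      @norm_add_sq ℂ H _ _ _ sN (h - sN)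
    rw [h0] at hsum
    simp at hsum
    have hsq : ‖h - sN‖ ^ 2 ≤ ‖h‖ ^ 2 := by nlinarith [sq_nonneg ‖sN‖]
    calc ‖h - sN‖ = Real.sqrt (‖h - sN‖ ^ 2) := (Real.sqrt_sq (norm_nonneg _)).symm
      _ ≤ Real.sqrt (‖h‖ ^ 2) := Real.sqrt_le_sqrt hsq
      _ = ‖h‖ := Real.sqrt_sq (norm_nonneg _)
  -- kernel section difference bound
  have hkd : ‖k r - k (rknots n)‖ ≤ L * Real.sqrt (2 * dist r (rknots n)) := by
    have hsq : ‖k r - k (rknots n)‖ ^ 2 ≤ 2 * L ^ 2 * dist r (rknots n) := by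
      have := @norm_sub_sq ℂ H _ _ _ (k r) (k (rknots n))
      have h1 : (inner ℂ (k r) (k r) : ℂ).re = ‖k r‖ ^ 2 := by
        simpa using @inner_self_eq_norm_sq ℂ H _ _ _ (k r)
      have h2 : (inner ℂ (k (rknots n)) (k (rknots n)) : ℂ).re = ‖k (rknots n)‖ ^ 2 := by
        simpa using @inner_self_eq_norm_sq ℂ H _ _ _ (k (rknots n))
      have := hLip r (rknots n)
      have hre : RCLike.re (inner ℂ (k r) (k (rknots n)) : ℂ)
          = (inner ℂ (k r) (k (rknots n)) : ℂ).re := by simp [RCLike.re_to_complex]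
      nlinarith [@norm_sub_sq ℂ H _ _ _ (k r) (k (rknots n))]
    have h1 : ‖k r - k (rknots n)‖ = Real.sqrt (‖k r - k (rknots n)‖ ^ 2) :=
      (Real.sqrt_sq (norm_nonneg _)).symm
    rw [h1]
    calc Real.sqrt (‖k r - k (rknots n)‖ ^ 2) ≤ Real.sqrt (L ^ 2 * (2 * dist r (rknots n))) :=
          Real.sqrt_le_sqrt (by linarith)
      _ = L * Real.sqrt (2 * dist r (rknots n)) := by
          rw [Real.sqrt_mul (sq_nonneg _), Real.sqrt_sq hL]
  -- orthogonality at the knot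
  have h0 : (inner ℂ (k (rknots n)) (h - sN) : ℂ) = 0 :=
    horth _ (Submodule.subset_span ⟨n, rfl⟩)
  have key : (inner ℂ (k r) h : ℂ) - (inner ℂ (k r) sN : ℂ)
      = inner ℂ (k r - k (rknots n)) (h - sN) := by
    rw [inner_sub_left, h0, sub_zero, inner_sub_right]
  rw [key]
  calc ‖(inner ℂ (k r - k (rknots n)) (h - sN) : ℂ)‖
      ≤ ‖k r - k (rknots n)‖ * ‖h - sN‖ := norm_inner_le_norm _ _
    _ ≤ (L * Real.sqrt (2 * dist r (rknots n))) * ‖h‖ :=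
        mul_le_mul hkd hres (norm_nonneg _)
          (mul_nonneg hL (Real.sqrt_nonneg _))
    _ ≤ 2 * L * Real.sqrt (2 * dist r (rknots n)) * ‖h‖ := by
        have : 0 ≤ L * Real.sqrt (2 * dist r (rknots n)) * ‖h‖ :=
          mul_nonneg (mul_nonneg hL (Real.sqrt_nonneg _)) (norm_nonneg _)
        nlinarith
end
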